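/- Let X be a real inner product space, P₁,…,P_r finite point sets in X with D = maxᵢ diam Pᵢ, η > 0, and a ∈ X such that B(a, η) ∩ conv Pᵢ ≠ ∅ for every i ∈ [r]. Then for every positive integer k there exist sequences {x^i_j}_{j=1}^k ⊆ Pᵢ (repetitions allowed) such that, setting a^i_k = (1/k)∑_{j=1}^k x^i_j, one has ‖a − (1/r)∑_{i=1}^r a^i_k‖ ≤ k^{−1/2} r^{−1/2} D + η. -/

import Mathlib

open Finset Metric

section ColorfulMaureyAux

variable {X : Type*} [NormedAddCommGroup X] [InnerProductSpace ℝ X]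

lemma exists_inner_nonpos' (s : Finset X) (y : X) (hy : y ∈ convexHull ℝ (s : Set X))
    (E : X) : ∃ x ∈ s, (inner ℝ (x - y) E : ℝ) ≤ 0 := by
  rw [Finset.convexHull_eq] at hy
  obtain ⟨w, hw0, hw1, hwy⟩ := hy
  rw [Finset.centerMass_eq_of_sum_1 _ _ hw1] at hwy
  by_contra h
  push_neg at h
  have key : ∑ x ∈ s, w x * (inner ℝ (x - y) E : ℝ) = 0 := by
    have h1 : ∑ x ∈ s, w x * (inner ℝ (x - y) E : ℝ)
        = (inner ℝ (∑ x ∈ s, w x • x) E : ℝ) - (∑ x ∈ s, w x) * (inner ℝ y E : ℝ) := by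
      rw [sum_inner, Finset.sum_mul, ← Finset.sum_sub_distrib]
      congr 1; ext x
      rw [inner_sub_left, real_inner_smul_left]
      ring
    simp only [id] at hwy
    rw [h1, hwy, hw1, one_mul, sub_self]
  have hpos : 0 < ∑ x ∈ s, w x * (inner ℝ (x - y) E : ℝ) := by
    obtain ⟨x₀, hx₀, hw₀⟩ : ∃ x ∈ s, w x ≠ 0 := by
      by_contra hc; push_neg at hc
      simp [Finset.sum_congr rfl hc] at hw1
    refine Finset.sum_pos' (fun x hx => mul_nonneg (hw0 x hx) (h x hx).le) ⟨x₀, hx₀, ?_⟩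
    exact mul_pos ((hw0 x₀ hx₀).lt_of_ne (Ne.symm hw₀)) (h x₀ hx₀)
  exact hpos.ne' key

lemma step_colors {r : ℕ} (P : Fin r → Finset X) (y : Fin r → X)
    (hy : ∀ i, y i ∈ convexHull ℝ ((P i : Set X))) (D : ℝ)
    (hD : ∀ i, ∀ x ∈ P i, ‖x - y i‖ ≤ D) (E : X) (s : Finset (Fin r)) :
    ∃ z : Fin r → X, (∀ i, z i ∈ P i) ∧
      ‖E + ∑ i ∈ s, (z i - y i)‖ ^ 2 ≤ ‖E‖ ^ 2 + s.card * D ^ 2 := by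
  have hne : ∀ i, ∃ x, x ∈ P i := by
    intro i
    have := hy i
    rcases convexHull_nonempty_iff.mp ⟨y i, this⟩ with ⟨x, hx⟩
    exact ⟨x, hx⟩
  induction s using Finset.induction_on with
  | empty =>
    exact ⟨fun i => (hne i).choose, fun i => (hne i).choose_spec, by simp⟩
  | @insert i s his ih =>
    obtain ⟨z, hz, hzb⟩ := ih
    set E' := E + ∑ j ∈ s, (z j - y j) with hE'
    obtain ⟨x₀, hx₀, hip⟩ := exists_inner_nonpos' (P i) (y i) (hy i) E'
    refine ⟨Function.update z i x₀, ?_, ?_⟩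
    · intro j
      rcases eq_or_ne j i with rfl | hji
      · simpa using hx₀
      · simpa [Function.update_of_ne hji] using hz j
    · rw [Finset.sum_insert his]
      have hsum : ∑ j ∈ s, (Function.update z i x₀ j - y j) = ∑ j ∈ s, (z j - y j) := by
        refine Finset.sum_congr rfl fun j hj => ?_
        rw [Function.update_of_ne (fun h => his (by rw [← h]; exact hj))]
      have harr : E + ((Function.update z i x₀ i - y i) + ∑ j ∈ s, (Function.update z i x₀ j - y j))
          = E' + (x₀ - y i) := by
        rw [hsum, Function.update_self, hE']; abel
      rw [harr, norm_add_sq_real]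
      have h1 : ‖x₀ - y i‖ ^ 2 ≤ D ^ 2 := by
        have := hD i x₀ hx₀
        nlinarith [norm_nonneg (x₀ - y i)]
      have h2 : (inner ℝ E' (x₀ - y i) : ℝ) ≤ 0 := by
        rw [real_inner_comm]; exact hip
      rw [Finset.card_insert_of_notMem his]
      push_cast
      nlinarith

lemma greedy_maurey {r : ℕ} (P : Fin r → Finset X) (y : Fin r → X)
    (hy : ∀ i, y i ∈ convexHull ℝ ((P i : Set X))) (D : ℝ)
    (hD : ∀ i, ∀ x ∈ P i, ‖x - y i‖ ≤ D) (n : ℕ) :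
    ∃ x : Fin r → Fin n → X, (∀ i j, x i j ∈ P i) ∧
      ‖∑ i, ∑ j, (x i j - y i)‖ ^ 2 ≤ (r * n) * D ^ 2 := by
  induction n with
  | zero => exact ⟨fun _ j => j.elim0, fun i j => j.elim0, by simp⟩
  | succ n ih =>
    obtain ⟨x, hx, hxb⟩ := ih
    set E := ∑ i, ∑ j, (x i j - y i) with hE
    obtain ⟨z, hz, hzb⟩ := step_colors P y hy D hD E Finset.univ
    refine ⟨fun i => Fin.snoc (x i) (z i), ?_, ?_⟩
    · intro i j
      refine Fin.lastCases ?_ (fun j => ?_) j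
      · simpa using hz i
      · simpa using hx i j
    · have hsum : ∑ i, ∑ j : Fin (n+1), ((Fin.snoc (x i) (z i) : Fin (n+1) → X) j - y i)
          = E + ∑ i, (z i - y i) := by
        rw [hE, ← Finset.sum_add_distrib]
        refine Finset.sum_congr rfl fun i _ => ?_
        rw [Fin.sum_univ_castSucc]
        simp
      rw [hsum]
      simp only [Finset.card_univ, Fintype.card_fin] at hzb
      push_cast at hzb hxb ⊢
      nlinarith [hzb, hxb]

end ColorfulMaureyAux

/-- Colorful Maurey lemma in a real inner product space: if the closed ball
`B(a, η)` meets `conv Pᵢ` for each of the finite sets `P₁,…,P_r` of diameter at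
most `D`, then for every `k ≥ 1` one can pick `k` points from each `Pᵢ`
(repetitions allowed) so that the centroid of the `r` empirical averages is
within `k^{−1/2} r^{−1/2} D + η` of `a`. -/
theorem colorful_maurey {X : Type*} [NormedAddCommGroup X] [InnerProductSpace ℝ X]
    (r : ℕ) (hr : 0 < r) (P : Fin r → Finset X) (D : ℝ)
    (hD : ∀ i, Metric.diam (P i : Set X) ≤ D) (η : ℝ) (hη : 0 < η) (a : X)
    (ha : ∀ i, ∃ y ∈ convexHull ℝ (P i : Set X), ‖a - y‖ ≤ η)
    (k : ℕ) (hk : 0 < k) :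
    ∃ x : Fin r → Fin k → X, (∀ i j, x i j ∈ P i) ∧
      ‖a - (r : ℝ)⁻¹ • ∑ i, (k : ℝ)⁻¹ • ∑ j, x i j‖ ≤
        D / (Real.sqrt k * Real.sqrt r) + η := by
  choose y hy hay using ha
  have hD0 : 0 ≤ D := le_trans diam_nonneg (hD ⟨0, hr⟩)
  have hD' : ∀ i, ∀ x ∈ P i, ‖x - y i‖ ≤ D := by
    intro i x hx
    have hb : Bornology.IsBounded (convexHull ℝ (P i : Set X)) :=
      isBounded_convexHull.mpr ((P i).finite_toSet.isBounded)
    have h1 : dist x (y i) ≤ diam (convexHull ℝ (P i : Set X)) :=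
      dist_le_diam_of_mem hb (subset_convexHull ℝ _ hx) (hy i)
    rw [← dist_eq_norm]
    calc dist x (y i) ≤ diam (convexHull ℝ (P i : Set X)) := h1
      _ = diam (P i : Set X) := by rw [convexHull_diam]
      _ ≤ D := hD i
  obtain ⟨x, hx, hxb⟩ := greedy_maurey P y hy D hD' k
  set E := ∑ i, ∑ j, (x i j - y i) with hE
  refine ⟨x, hx, ?_⟩
  -- norm bound on E
  have hr0 : (0:ℝ) < r := by exact_mod_cast hr
  have hk0 : (0:ℝ) < k := by exact_mod_cast hk
  have hsr : (0:ℝ) < Real.sqrt r := Real.sqrt_pos.mpr hr0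
  have hsk : (0:ℝ) < Real.sqrt k := Real.sqrt_pos.mpr hk0
  have hEnorm : ‖E‖ ≤ Real.sqrt r * Real.sqrt k * D := by
    have h1 : ‖E‖ = Real.sqrt (‖E‖ ^ 2) := (Real.sqrt_sq (norm_nonneg _)).symm
    rw [h1]
    have h2 : Real.sqrt (‖E‖ ^ 2) ≤ Real.sqrt ((r * k) * D ^ 2) := Real.sqrt_le_sqrt hxb
    calc Real.sqrt (‖E‖ ^ 2) ≤ Real.sqrt ((r * k) * D ^ 2) := h2
      _ = Real.sqrt r * Real.sqrt k * D := by
          rw [Real.sqrt_mul (by positivity), Real.sqrt_mul (by positivity), Real.sqrt_sq hD0]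
  -- algebraic identity
  have hid : a - (r : ℝ)⁻¹ • ∑ i, (k : ℝ)⁻¹ • ∑ j, x i j
      = (r : ℝ)⁻¹ • ∑ i, (a - y i) - ((r : ℝ)⁻¹ * (k : ℝ)⁻¹) • E := by
    rw [hE]
    have e1 : ∑ i, ∑ j, (x i j - y i)
        = (∑ i, ∑ j, x i j) - (k : ℝ) • ∑ i, y i := by
      rw [Finset.smul_sum, ← Finset.sum_sub_distrib]
      refine Finset.sum_congr rfl fun i _ => ?_
      rw [Finset.sum_sub_distrib, Finset.sum_const, Finset.card_univ, Fintype.card_fin,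
        ← Nat.cast_smul_eq_nsmul ℝ]
    have e2 : ∑ i, (a - y i) = (r : ℝ) • a - ∑ i, y i := by
      rw [Finset.sum_sub_distrib, Finset.sum_const, Finset.card_univ, Fintype.card_fin,
        ← Nat.cast_smul_eq_nsmul ℝ]
    have e3 : ∑ i, (k : ℝ)⁻¹ • ∑ j, x i j = (k : ℝ)⁻¹ • ∑ i, ∑ j, x i j :=
      (Finset.smul_sum).symm
    rw [e1, e2, e3]
    match_scalars <;> field_simp <;> ring
  rw [hid]
  have hA : ‖(r : ℝ)⁻¹ • ∑ i, (a - y i)‖ ≤ η := by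
    rw [norm_smul, Real.norm_eq_abs, abs_of_pos (by positivity)]
    have : ‖∑ i, (a - y i)‖ ≤ (r : ℝ) * η := by
      calc ‖∑ i, (a - y i)‖ ≤ ∑ i, ‖a - y i‖ := norm_sum_le _ _
        _ ≤ ∑ _i : Fin r, η := Finset.sum_le_sum fun i _ => hay i
        _ = (r : ℝ) * η := by simp [mul_comm]
    calc (r : ℝ)⁻¹ * ‖∑ i, (a - y i)‖ ≤ (r : ℝ)⁻¹ * ((r : ℝ) * η) := by
          exact mul_le_mul_of_nonneg_left this (by positivity)
      _ = η := by field_simp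
  have hB : ‖((r : ℝ)⁻¹ * (k : ℝ)⁻¹) • E‖ ≤ D / (Real.sqrt k * Real.sqrt r) := by
    rw [norm_smul, Real.norm_eq_abs, abs_of_pos (by positivity)]
    have h1 : (r : ℝ)⁻¹ * (k : ℝ)⁻¹ * ‖E‖
        ≤ (r : ℝ)⁻¹ * (k : ℝ)⁻¹ * (Real.sqrt r * Real.sqrt k * D) :=
      mul_le_mul_of_nonneg_left hEnorm (by positivity)
    have h2 : (r : ℝ)⁻¹ * (k : ℝ)⁻¹ * (Real.sqrt r * Real.sqrt k * D)
        = D / (Real.sqrt k * Real.sqrt r) := by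
      have hrs : (r : ℝ) = Real.sqrt r * Real.sqrt r := (Real.mul_self_sqrt hr0.le).symm
      have hks : (k : ℝ) = Real.sqrt k * Real.sqrt k := (Real.mul_self_sqrt hk0.le).symm
      field_simp
      rw [Real.sq_sqrt hr0.le, Real.sq_sqrt hk0.le]
    linarith [h1, h2.symm ▸ h1]
  calc ‖(r : ℝ)⁻¹ • ∑ i, (a - y i) - ((r : ℝ)⁻¹ * (k : ℝ)⁻¹) • E‖
      ≤ ‖(r : ℝ)⁻¹ • ∑ i, (a - y i)‖ + ‖((r : ℝ)⁻¹ * (k : ℝ)⁻¹) • E‖ := norm_sub_le _ _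
    _ ≤ η + D / (Real.sqrt k * Real.sqrt r) := add_le_add hA hB
    _ = D / (Real.sqrt k * Real.sqrt r) + η := by ring
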